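/- arXiv:1508.07633 — 2 statements merged into one kernel-verified Lean document; each statement's English description precedes it below -/
import Mathlib

section
/- Let A, B be n×n complex matrices and let C = A + B. Then the total algebraic multiplicity of the new eigenvalues introduced by the perturbation satisfies ∑_{λ ∈ Λ(C) \ Λ(A)} m_a(C, λ) ≤ rank(B)·|Λ(A)| + d(A). -/
open Matrix Polynomial Module

/-- The set of distinct eigenvalues of a matrix: the roots of its characteristic polynomial. -/
noncomputable def eigSet {n : ℕ} (M : Matrix (Fin n) (Fin n) ℂ) : Finset ℂ :=
  M.charpoly.roots.toFinset

/-- Algebraic multiplicity of `μ` as an eigenvalue of `M` (multiplicity as a root of the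
characteristic polynomial; `0` if `μ` is not an eigenvalue). -/
noncomputable def algMult {n : ℕ} (M : Matrix (Fin n) (Fin n) ℂ) (μ : ℂ) : ℕ :=
  M.charpoly.rootMultiplicity μ

/-- Geometric multiplicity of `μ` as an eigenvalue of `M`: the dimension of `ker (M - μ I)`. -/
noncomputable def geomMult {n : ℕ} (M : Matrix (Fin n) (Fin n) ℂ) (μ : ℂ) : ℕ :=
  Module.finrank ℂ (LinearMap.ker (M - μ • (1 : Matrix (Fin n) (Fin n) ℂ)).mulVecLin)

/-- The defectivity of a matrix: the sum over its distinct eigenvalues of the differences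
between algebraic and geometric multiplicities. -/
noncomputable def defect {n : ℕ} (M : Matrix (Fin n) (Fin n) ℂ) : ℕ :=
  ∑ μ ∈ eigSet M, (algMult M μ - geomMult M μ)

/-- A matrix is diagonalizable if it is similar to a diagonal matrix. -/
def IsDiagonalizable {n : ℕ} (M : Matrix (Fin n) (Fin n) ℂ) : Prop :=
  ∃ P D : Matrix (Fin n) (Fin n) ℂ, IsUnit P ∧ D.IsDiag ∧ M = P * D * P⁻¹

section Aux
variable {n : ℕ}

lemma charpoly_sub_smul_one (M : Matrix (Fin n) (Fin n) ℂ) (μ : ℂ) :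
    (M - μ • (1 : Matrix (Fin n) (Fin n) ℂ)).charpoly = M.charpoly.comp (X + C μ) := by
  classical
  let f : ℂ[X] →+* ℂ[X] := (aeval (X + C μ) : ℂ[X] →ₐ[ℂ] ℂ[X]).toRingHom
  have hmap : (charmatrix M).map f = charmatrix (M - μ • (1 : Matrix (Fin n) (Fin n) ℂ)) := by
    ext i j
    by_cases h : i = j
    · subst h
      simp [f, charmatrix_apply_eq, Matrix.sub_apply, Matrix.smul_apply, Matrix.one_apply]
      ring
    · simp [f, charmatrix_apply_ne _ _ _ h, Matrix.sub_apply, Matrix.smul_apply,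
        Matrix.one_apply_ne h]
  have hdet := RingHom.map_det f (charmatrix M)
  rw [RingHom.mapMatrix_apply, hmap] at hdet
  have : M.charpoly.comp (X + C μ) = f M.charpoly := by
    simp [f, Matrix.charpoly, aeval_def, Polynomial.comp, Polynomial.algebraMap_eq]
  rw [Matrix.charpoly, ← hdet, this, Matrix.charpoly]

lemma mulVecLin_charpoly (N : Matrix (Fin n) (Fin n) ℂ) :
    N.mulVecLin.charpoly = N.charpoly := by
  have h : (LinearMap.toMatrix (Pi.basisFun ℂ (Fin n)) (Pi.basisFun ℂ (Fin n)) N.mulVecLin) = N := by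
    rw [LinearMap.toMatrix_eq_toMatrix', ← Matrix.toLin'_apply', LinearMap.toMatrix'_toLin']
  conv_rhs => rw [← h]
  exact (LinearMap.charpoly_toMatrix _ _).symm

lemma geomMult_le_algMult (M : Matrix (Fin n) (Fin n) ℂ) (μ : ℂ) :
    geomMult M μ ≤ algMult M μ := by
  set N := M - μ • (1 : Matrix (Fin n) (Fin n) ℂ) with hN
  have hker : LinearMap.ker N.mulVecLin ≤ Module.End.maxGenEigenspace N.mulVecLin 0 := by
    intro x hx
    rw [Module.End.mem_maxGenEigenspace]
    exact ⟨1, by simpa using hx⟩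
  calc geomMult M μ ≤ finrank ℂ (Module.End.maxGenEigenspace N.mulVecLin 0) :=
        Submodule.finrank_mono hker
    _ = natTrailingDegree N.mulVecLin.charpoly := LinearMap.finrank_maxGenEigenspace_zero_eq _
    _ = natTrailingDegree (M.charpoly.comp (X + C μ)) := by
        rw [mulVecLin_charpoly, hN, charpoly_sub_smul_one]
    _ = algMult M μ := (rootMultiplicity_eq_natTrailingDegree).symm

lemma sum_algMult_eq (M : Matrix (Fin n) (Fin n) ℂ) :
    ∑ μ ∈ eigSet M, algMult M μ = n := by
  have hcard : M.charpoly.roots.card = M.charpoly.natDegree :=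
    splits_iff_card_roots.mp (IsAlgClosed.splits _)
  have : ∑ μ ∈ eigSet M, algMult M μ = Multiset.card M.charpoly.roots := by
    rw [← Multiset.toFinset_sum_count_eq]
    exact Finset.sum_congr rfl fun μ _ => (count_roots _).symm
  rw [this, hcard, Matrix.charpoly_natDegree_eq_dim, Fintype.card_fin]

lemma algMult_eq_zero_of_not_mem {M : Matrix (Fin n) (Fin n) ℂ} {μ : ℂ}
    (h : μ ∉ eigSet M) : algMult M μ = 0 := by
  rw [algMult, rootMultiplicity_eq_zero_iff]
  intro hr
  exact absurd (by
    rw [eigSet, Multiset.mem_toFinset, mem_roots M.charpoly_monic.ne_zero]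
    exact hr) h

lemma geomMult_A_le (A B C : Matrix (Fin n) (Fin n) ℂ) (hC : C = A + B) (μ : ℂ) :
    geomMult A μ ≤ geomMult C μ + B.rank := by
  set P := A - μ • (1 : Matrix (Fin n) (Fin n) ℂ) with hP
  set Q := C - μ • (1 : Matrix (Fin n) (Fin n) ℂ) with hQ
  have hQP : Q = P + B := by rw [hQ, hP, hC]; exact add_sub_right_comm A B _
  have e1 : finrank ℂ (LinearMap.range P.mulVecLin) + geomMult A μ = n := by
    rw [geomMult, ← hP, LinearMap.finrank_range_add_finrank_ker, finrank_pi, Fintype.card_fin]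
  have e2 : finrank ℂ (LinearMap.range Q.mulVecLin) + geomMult C μ = n := by
    rw [geomMult, ← hQ, LinearMap.finrank_range_add_finrank_ker, finrank_pi, Fintype.card_fin]
  have e3 : finrank ℂ (LinearMap.range Q.mulVecLin)
      ≤ finrank ℂ (LinearMap.range P.mulVecLin) + B.rank := by
    have hle : LinearMap.range Q.mulVecLin ≤
        LinearMap.range P.mulVecLin ⊔ LinearMap.range B.mulVecLin := by
      rintro x ⟨v, rfl⟩
      rw [hQP, Matrix.mulVecLin_add]
      exact Submodule.add_mem_sup ⟨v, rfl⟩ ⟨v, rfl⟩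
    exact (Submodule.finrank_mono hle).trans
      (Submodule.finrank_add_le_finrank_add_finrank _ _)
  omega

end Aux

/-- the total algebraic multiplicity of the new eigenvalues introduced by the
perturbation is at most `rank(B)·|Λ(A)| + d(A)`. -/

theorem sum_algMult_new_eigenvalues_le {n : ℕ}
    (A B C : Matrix (Fin n) (Fin n) ℂ) (hC : C = A + B) :
    ∑ μ ∈ eigSet C \ eigSet A, algMult C μ ≤ B.rank * (eigSet A).card + defect A := by
  classical
  have hS : ∑ μ ∈ eigSet C, algMult C μ = n := sum_algMult_eq C
  have hsplit : ∑ μ ∈ eigSet C ∩ eigSet A, algMult C μ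
      + ∑ μ ∈ eigSet C \ eigSet A, algMult C μ = ∑ μ ∈ eigSet C, algMult C μ :=
    Finset.sum_inter_add_sum_sdiff _ _ _
  have hTC : ∑ μ ∈ eigSet A, algMult C μ = ∑ μ ∈ eigSet C ∩ eigSet A, algMult C μ := by
    refine (Finset.sum_subset (Finset.inter_subset_right) ?_).symm
    intro μ hμA hμ
    apply algMult_eq_zero_of_not_mem
    intro hμC
    exact hμ (Finset.mem_inter.mpr ⟨hμC, hμA⟩)
  set r := B.rank * (eigSet A).card with hr
  have key : n ≤ ∑ μ ∈ eigSet A, algMult C μ + (r + defect A) := by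
    have h1 : (n : ℕ) ≤ ∑ μ ∈ eigSet A, geomMult A μ + defect A := by
      calc (n:ℕ) = ∑ μ ∈ eigSet A, algMult A μ := (sum_algMult_eq A).symm
        _ ≤ ∑ μ ∈ eigSet A, (geomMult A μ + (algMult A μ - geomMult A μ)) :=
            Finset.sum_le_sum fun μ _ => by omega
        _ = ∑ μ ∈ eigSet A, geomMult A μ + defect A := by
            rw [Finset.sum_add_distrib]; rfl
    have h2 : ∑ μ ∈ eigSet A, geomMult A μ ≤ ∑ μ ∈ eigSet A, geomMult C μ + r := by
      calc ∑ μ ∈ eigSet A, geomMult A μ ≤ ∑ μ ∈ eigSet A, (geomMult C μ + B.rank) :=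
            Finset.sum_le_sum fun μ _ => geomMult_A_le A B C hC μ
        _ = ∑ μ ∈ eigSet A, geomMult C μ + r := by
            rw [Finset.sum_add_distrib, Finset.sum_const, smul_eq_mul, hr, mul_comm]
    have h3 : ∑ μ ∈ eigSet A, geomMult C μ ≤ ∑ μ ∈ eigSet A, algMult C μ :=
      Finset.sum_le_sum fun μ _ => geomMult_le_algMult C μ
    omega
  omega
end

section
/- Let A, B be n×n complex matrices and let C = A + B. Then the number of eigenvalues of C that are not eigenvalues of A satisfies |Λ(C) \ Λ(A)| ≤ rank(B)·|Λ(A)| + d(A). -/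
open Matrix Polynomial Module

lemma charpoly_mulVecLin {n : ℕ} (M : Matrix (Fin n) (Fin n) ℂ) :
    (M.mulVecLin).charpoly = M.charpoly := by
  rw [← LinearMap.charpoly_toMatrix M.mulVecLin (Pi.basisFun ℂ (Fin n)),
    LinearMap.toMatrix_eq_toMatrix', ← Matrix.toLin'_apply', LinearMap.toMatrix'_toLin']

lemma charpoly_smul_one {g : ℕ} (μ : ℂ) :
    (μ • (1 : Matrix (Fin g) (Fin g) ℂ)).charpoly = (X - C μ)^g := by
  rw [Matrix.charpoly, charmatrix, Matrix.smul_one_eq_diagonal]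
  simp only [Matrix.scalar_apply, RingHom.mapMatrix_apply]
  rw [Matrix.diagonal_map (by simp), Matrix.diagonal_sub, Matrix.det_diagonal]
  simp

/-- Any subspace of the `μ`-eigenspace of `M` has dimension at most the algebraic
multiplicity of `μ`. -/
lemma subspace_le_algMult {n : ℕ} (M : Matrix (Fin n) (Fin n) ℂ) (μ : ℂ)
    (W : Submodule ℂ (Fin n → ℂ))
    (hW : W ≤ LinearMap.ker (M - μ • (1 : Matrix (Fin n) (Fin n) ℂ)).mulVecLin) :
    finrank ℂ W ≤ algMult M μ := by
  obtain ⟨W', hcompl⟩ := Submodule.exists_isCompl W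
  set bW := Module.finBasis ℂ W
  set bW' := Module.finBasis ℂ W'
  set b := (bW.prod bW').map (Submodule.prodEquivOfIsCompl W W' hcompl) with hb
  set N := LinearMap.toMatrix b b M.mulVecLin with hN
  have hmem : ∀ j, (b (Sum.inl j) : Fin n → ℂ) ∈ W := by
    intro j
    simp only [hb, Basis.map_apply, Basis.prod_apply, Sum.elim_inl]
    simp [Submodule.coe_prodEquivOfIsCompl']
  have heig : ∀ x ∈ W, M.mulVecLin x = μ • x := by
    intro x hx
    have h1 := hW hx
    rw [LinearMap.mem_ker] at h1
    have h2 : (M - μ • 1).mulVecLin x = M.mulVecLin x - μ • x := by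
      simp [Matrix.mulVecLin_apply, Matrix.sub_mulVec, Matrix.smul_mulVec,
        Matrix.one_mulVec]
    rw [h2, sub_eq_zero] at h1
    exact h1
  have hcol : ∀ i j, N i (Sum.inl j) =
      (μ • (Finsupp.single (Sum.inl j) (1:ℂ)) :
        Sum (Fin (finrank ℂ W)) (Fin (finrank ℂ W')) →₀ ℂ) i := by
    intro i j
    rw [hN, LinearMap.toMatrix_apply, heig _ (hmem j), _root_.map_smul, Basis.repr_self]
  have h11 : N.toBlocks₁₁ = μ • 1 := by
    ext i j
    simp [Matrix.toBlocks₁₁, hcol (Sum.inl i) j, Finsupp.single_apply, Matrix.one_apply, eq_comm]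
  have h21 : N.toBlocks₂₁ = 0 := by
    ext i j
    simp [Matrix.toBlocks₂₁, hcol (Sum.inr i) j, Finsupp.single_apply]
  have hcp : M.charpoly =
      (μ • (1 : Matrix (Fin (finrank ℂ W)) (Fin (finrank ℂ W)) ℂ)).charpoly *
        (N.toBlocks₂₂).charpoly := by
    rw [← _root_.charpoly_mulVecLin, ← LinearMap.charpoly_toMatrix M.mulVecLin b, ← hN]
    conv_lhs => rw [← Matrix.fromBlocks_toBlocks N, h11, h21]
    rw [Matrix.charpoly_fromBlocks_zero₂₁]
  rw [algMult, Polynomial.le_rootMultiplicity_iff (M.charpoly_monic.ne_zero), hcp,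
    charpoly_smul_one]
  exact Dvd.intro _ rfl

lemma sum_algMult {n : ℕ} (M : Matrix (Fin n) (Fin n) ℂ) :
    ∑ μ ∈ eigSet M, algMult M μ = n := by
  have hs := (Polynomial.splits_iff_card_roots).mp (IsAlgClosed.splits M.charpoly)
  rw [Matrix.charpoly_natDegree_eq_dim, Fintype.card_fin] at hs
  have h2 : ∑ μ ∈ eigSet M, algMult M μ = Multiset.card M.charpoly.roots := by
    rw [eigSet, ← Multiset.toFinset_sum_count_eq]
    exact Finset.sum_congr rfl fun μ _ => by rw [algMult, ← Polynomial.count_roots]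
  rw [h2, hs]

lemma algMult_eq_zero {n : ℕ} {M : Matrix (Fin n) (Fin n) ℂ} {μ : ℂ} (h : μ ∉ eigSet M) :
    algMult M μ = 0 := by
  rw [algMult, Polynomial.rootMultiplicity_eq_zero]
  intro hr
  exact h (Multiset.mem_toFinset.mpr ((Polynomial.mem_roots M.charpoly_monic.ne_zero).mpr hr))

lemma one_le_algMult {n : ℕ} {M : Matrix (Fin n) (Fin n) ℂ} {μ : ℂ} (h : μ ∈ eigSet M) :
    1 ≤ algMult M μ := by
  rw [algMult]
  have hr := (Polynomial.mem_roots M.charpoly_monic.ne_zero).mp (Multiset.mem_toFinset.mp h)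
  exact (Polynomial.rootMultiplicity_pos M.charpoly_monic.ne_zero).mpr hr

/-- Key inequality: the geometric multiplicity of `μ` for `A` is at most the algebraic
multiplicity of `μ` for `A + B` plus the rank of `B`. -/
lemma key_ineq {n : ℕ} (A B : Matrix (Fin n) (Fin n) ℂ) (μ : ℂ) :
    geomMult A μ ≤ algMult (A + B) μ + B.rank := by
  set p := LinearMap.ker (A - μ • (1 : Matrix (Fin n) (Fin n) ℂ)).mulVecLin
  set q := LinearMap.ker B.mulVecLin
  have h1 : p ⊓ q ≤ LinearMap.ker ((A + B) - μ • (1 : Matrix (Fin n) (Fin n) ℂ)).mulVecLin := by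
    rintro x ⟨hx1, hx2⟩
    rw [LinearMap.mem_ker] at *
    rw [add_sub_right_comm, Matrix.mulVecLin_add, LinearMap.add_apply, hx1, hx2, add_zero]
  have h2 : finrank ℂ ↥(p ⊓ q) ≤ algMult (A + B) μ :=
    subspace_le_algMult (A + B) μ _ h1
  have h3 : finrank ℂ ↥(p ⊔ q) + finrank ℂ ↥(p ⊓ q) = finrank ℂ p + finrank ℂ q :=
    Submodule.finrank_sup_add_finrank_inf_eq p q
  have h4 : finrank ℂ ↥(p ⊔ q) ≤ n := by
    have := Submodule.finrank_le (p ⊔ q)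
    rwa [Module.finrank_fin_fun] at this
  have h5 : B.rank + finrank ℂ q = n := by
    have := LinearMap.finrank_range_add_finrank_ker B.mulVecLin
    rwa [Module.finrank_fin_fun] at this
  have h6 : geomMult A μ = finrank ℂ p := rfl
  omega

/-- the number of new eigenvalues introduced by the perturbation is at most
`rank(B)·|Λ(A)| + d(A)`. -/
theorem card_new_eigenvalues_le {n : ℕ}
    (A B C : Matrix (Fin n) (Fin n) ℂ) (hC : C = A + B) :
    (eigSet C \ eigSet A).card ≤ B.rank * (eigSet A).card + defect A := by
  classical
  -- the number of new eigenvalues is at most their total algebraic multiplicity in C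
  have hcard : (eigSet C \ eigSet A).card ≤ ∑ μ ∈ eigSet C \ eigSet A, algMult C μ := by
    rw [Finset.card_eq_sum_ones]
    exact Finset.sum_le_sum fun μ hμ => one_le_algMult (Finset.mem_sdiff.mp hμ).1
  -- splitting the total algebraic multiplicity of C
  have hsplit : (∑ μ ∈ eigSet A, algMult C μ) + ∑ μ ∈ eigSet C \ eigSet A, algMult C μ = n := by
    rw [← Finset.sum_union (Finset.disjoint_sdiff), Finset.union_sdiff_self_eq_union]
    have h : ∑ x ∈ eigSet A ∪ eigSet C, algMult C x = ∑ μ ∈ eigSet C, algMult C μ :=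
      (Finset.sum_subset Finset.subset_union_right fun x _ hx =>
        algMult_eq_zero hx).symm
    rw [h, sum_algMult C]
  -- bounding n from above
  have hup : (n : ℕ) ≤ (∑ μ ∈ eigSet A, algMult C μ) + B.rank * (eigSet A).card + defect A := by
    have e1 : (n : ℕ) = ∑ μ ∈ eigSet A, algMult A μ := (sum_algMult A).symm
    have e2 : ∀ μ ∈ eigSet A,
        algMult A μ ≤ (algMult C μ + B.rank) + (algMult A μ - geomMult A μ) := by
      intro μ _
      have hk : geomMult A μ ≤ algMult C μ + B.rank := by
        rw [hC]; exact key_ineq A B μ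
      omega
    calc (n : ℕ) = ∑ μ ∈ eigSet A, algMult A μ := e1
      _ ≤ ∑ μ ∈ eigSet A, ((algMult C μ + B.rank) + (algMult A μ - geomMult A μ)) :=
          Finset.sum_le_sum e2
      _ = (∑ μ ∈ eigSet A, algMult C μ) + B.rank * (eigSet A).card + defect A := by
          rw [Finset.sum_add_distrib, Finset.sum_add_distrib, Finset.sum_const, smul_eq_mul,
            mul_comm, defect]
  -- conclude
  set S := ∑ μ ∈ eigSet A, algMult C μ
  set t := B.rank * (eigSet A).card
  omega
end
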